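/- arXiv:2409.11747 — 4 statements merged into one kernel-verified Lean document; each statement's English description precedes it below -/
import Mathlib

section
/- Let λ : ℝ≥0 → ℝ be the solution of the initial value problem λ'(t) = e^{-λ(t)} · Σ_{k=0}^{Δ-1} (λ(t)^k / k!) · q_{k+1} with λ(0) = 0, where q_k = Σ_{d≥k} p_d for a probability distribution (p_k)_{k≥2} on {2,3,...} supported on {2,...,Δ}. Then λ(t) → ∞ and λ'(t) → 0 as t → ∞. -/
open Filter MeasureTheory

/-- For the IVP λ'(t) = e^{-λ(t)} Σ_{k=0}^{Δ-1} (λ(t)^k/k!) q_{k+1}, λ(0) = 0,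
where q_k = Σ_{d≥k} p_d for a probability distribution (p_k) supported on {2,...,Δ},
the solution satisfies λ(t) → ∞ and λ'(t) → 0 as t → ∞. -/
theorem stmt1 (Δ : ℕ) (hΔ : 2 ≤ Δ) (p q : ℕ → ℝ)
    (hp0 : ∀ k, 0 ≤ p k)
    (hsupp : ∀ k, k < 2 ∨ Δ < k → p k = 0)
    (hsum : ∑ k ∈ Finset.Icc 2 Δ, p k = 1)
    (hq : ∀ k, q k = ∑ d ∈ Finset.Icc k Δ, p d)
    (lam : ℝ → ℝ) (hlam0 : lam 0 = 0)
    (hode : ∀ t, HasDerivAt lam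
      (Real.exp (-(lam t)) *
        ∑ k ∈ Finset.range Δ, lam t ^ k / (Nat.factorial k : ℝ) * q (k + 1)) t) :
    Tendsto lam atTop atTop ∧
    Tendsto (fun t => Real.exp (-(lam t)) *
        ∑ k ∈ Finset.range Δ, lam t ^ k / (Nat.factorial k : ℝ) * q (k + 1))
      atTop (nhds 0) := by
  have hq0 : ∀ k, 0 ≤ q k := fun k => by
    rw [hq]; exact Finset.sum_nonneg fun d _ => hp0 d
  have hq1 : q 1 = 1 := by
    rw [hq 1, ← Finset.Ioc_insert_left (by omega : (1:ℕ) ≤ Δ),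
      Finset.sum_insert (by simp), hsupp 1 (Or.inl one_lt_two),
      ← Finset.Icc_add_one_left_eq_Ioc, (by norm_num : (1:ℕ) + 1 = 2), hsum]
    ring
  set Ψ : ℝ → ℝ := fun x => Real.exp (-x) *
      ∑ k ∈ Finset.range Δ, x ^ k / (Nat.factorial k : ℝ) * q (k + 1) with hΨdef
  have hc : Continuous lam := continuous_iff_continuousAt.mpr fun t => (hode t).continuousAt
  have hsum_ge : ∀ x : ℝ, 0 ≤ x →
      (1:ℝ) ≤ ∑ k ∈ Finset.range Δ, x ^ k / (Nat.factorial k : ℝ) * q (k + 1) := by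
    intro x hx
    have h0 : (0:ℕ) ∈ Finset.range Δ := by simp; omega
    have := Finset.single_le_sum
      (f := fun k => x ^ k / (Nat.factorial k : ℝ) * q (k + 1))
      (fun k _ => mul_nonneg (div_nonneg (pow_nonneg hx k) (Nat.cast_nonneg _)) (hq0 _)) h0
    simpa [hq1] using this
  -- nonnegativity of lam on [0, ∞)
  have hnonneg : ∀ t : ℝ, 0 ≤ t → 0 ≤ lam t := by
    by_contra h
    push_neg at h
    obtain ⟨t0, ht0, hlt⟩ := h
    have ht0' : 0 < t0 := by
      rcases eq_or_lt_of_le ht0 with rfl | h'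
      · rw [hlam0] at hlt; linarith
      · exact h'
    set S : Set ℝ := Set.Icc 0 t0 ∩ lam ⁻¹' Set.Ici 0 with hSdef
    have hS0 : (0:ℝ) ∈ S := ⟨⟨le_refl 0, ht0'.le⟩, by simp [hlam0]⟩
    have hbdd : BddAbove S := ⟨t0, fun x hx => hx.1.2⟩
    have hclosed : IsClosed S := isClosed_Icc.inter (isClosed_Ici.preimage hc)
    set s := sSup S with hsdef
    have hsS : s ∈ S := hclosed.csSup_mem ⟨0, hS0⟩ hbdd
    have hs0 : (0:ℝ) ≤ lam s := hsS.2
    have hst0 : s < t0 := lt_of_le_of_ne hsS.1.2 (by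
      intro h'; rw [h'] at hs0; linarith)
    have hpos : 0 < Real.exp (-(lam s)) *
        ∑ k ∈ Finset.range Δ, lam s ^ k / (Nat.factorial k : ℝ) * q (k + 1) := by
      have := hsum_ge (lam s) hs0
      have he : 0 < Real.exp (-(lam s)) := Real.exp_pos _
      nlinarith
    have hder := hode s
    rw [hasDerivAt_iff_tendsto_slope] at hder
    have h1 : ∀ᶠ x in nhdsWithin s {s}ᶜ, 0 < slope lam s x :=
      hder (Ioi_mem_nhds hpos)
    have h2 : ∀ᶠ x in nhdsWithin s (Set.Ioi s), 0 < slope lam s x :=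
      h1.filter_mono (nhdsWithin_mono s (fun x (hx : x ∈ Set.Ioi s) => Set.mem_compl_singleton_iff.mpr (ne_of_gt hx)))
    have h3 : ∀ᶠ x in nhdsWithin s (Set.Ioi s), x ∈ Set.Ioc s t0 :=
      Ioc_mem_nhdsGT_of_mem ⟨le_refl s, hst0⟩
    obtain ⟨x, hx1, hx2⟩ := (h2.and h3).exists
    have hxs : s < x := hx2.1
    have hlx : 0 ≤ lam x := by
      rw [slope_def_field, div_pos_iff] at hx1
      rcases hx1 with ⟨h', _⟩ | ⟨_, h'⟩
      · linarith
      · linarith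
    have hxle : x ≤ s := le_csSup hbdd ⟨⟨le_trans hsS.1.1 hxs.le, hx2.2⟩, hlx⟩
    linarith
  -- growth: exp (lam t) ≥ 1 + t for t ≥ 0
  have hg : ∀ t, HasDerivAt (fun t => Real.exp (lam t))
      (Real.exp (lam t) * (Real.exp (-(lam t)) *
        ∑ k ∈ Finset.range Δ, lam t ^ k / (Nat.factorial k : ℝ) * q (k + 1))) t :=
    fun t => (hode t).exp
  have hgrow : ∀ t : ℝ, 0 ≤ t → 1 + t ≤ Real.exp (lam t) := by
    intro t ht
    have key := (convex_Ici (0:ℝ)).mul_sub_le_image_sub_of_le_deriv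
      (f := fun t => Real.exp (lam t)) (C := 1)
      ((Real.continuous_exp.comp hc).continuousOn)
      (fun x _ => (hg x).differentiableAt.differentiableWithinAt)
      (fun x hx => by
        rw [interior_Ici] at hx
        rw [(hg x).deriv]
        have hlx : 0 ≤ lam x := hnonneg x (le_of_lt hx)
        have h1 : Real.exp (lam x) * Real.exp (-(lam x)) = 1 := by
          rw [← Real.exp_add]; simp
        have h2 := hsum_ge (lam x) hlx
        calc (1:ℝ) = Real.exp (lam x) * Real.exp (-(lam x)) * 1 := by rw [h1]; ring
          _ ≤ Real.exp (lam x) * Real.exp (-(lam x)) *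
              (∑ k ∈ Finset.range Δ, lam x ^ k / (Nat.factorial k : ℝ) * q (k + 1)) := by
              have : (0:ℝ) < Real.exp (lam x) * Real.exp (-(lam x)) := by
                rw [h1]; norm_num
              nlinarith
          _ = Real.exp (lam x) * (Real.exp (-(lam x)) *
              ∑ k ∈ Finset.range Δ, lam x ^ k / (Nat.factorial k : ℝ) * q (k + 1)) := by ring)
      0 (Set.self_mem_Ici) t ht ht
    simp only [hlam0, Real.exp_zero] at key
    linarith
  have hlog : ∀ t : ℝ, 0 ≤ t → Real.log (1 + t) ≤ lam t := by
    intro t ht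
    rw [Real.log_le_iff_le_exp (by linarith)]
    exact hgrow t ht
  have h1 : Tendsto lam atTop atTop := by
    apply tendsto_atTop_mono' atTop (eventually_atTop.2 ⟨0, fun t ht => hlog t ht⟩)
    exact Real.tendsto_log_atTop.comp (tendsto_atTop_add_const_left atTop 1 tendsto_id)
  refine ⟨h1, ?_⟩
  have hΨ0 : Tendsto Ψ atTop (nhds 0) := by
    have heq : Ψ = fun x => ∑ k ∈ Finset.range Δ,
        (x ^ k * Real.exp (-x)) * (q (k + 1) / (Nat.factorial k : ℝ)) := by
      funext x
      simp only [hΨdef, Finset.mul_sum]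
      exact Finset.sum_congr rfl fun k _ => by ring
    rw [heq]
    have := tendsto_finset_sum (Finset.range Δ)
      (fun k (_ : k ∈ Finset.range Δ) =>
        (Real.tendsto_pow_mul_exp_neg_atTop_nhds_zero k).mul_const
          (q (k + 1) / (Nat.factorial k : ℝ)))
    simpa using this
  exact hΨ0.comp h1
end

section
/- Let λ solve λ'(t) = e^{-λ(t)} Σ_{k=0}^{Δ-1} (λ(t)^k/k!) q_{k+1}, λ(0)=0, and define f(t) := -λ''(t). Then f(t) = λ'(t) e^{-λ(t)} Σ_{k=0}^{Δ-1} (λ(t)^k/k!) p_{k+1}, f is nonnegative, and ∫_0^∞ f(t) dt = 1, i.e., f is a probability density function on ℝ≥0. -/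
open Filter MeasureTheory Topology Set

lemma aux_sum_hasDerivAt (Δ : ℕ) (q : ℕ → ℝ) (x : ℝ) :
    HasDerivAt (fun x : ℝ => ∑ k ∈ Finset.range Δ, x ^ k / (Nat.factorial k : ℝ) * q (k + 1))
      (∑ k ∈ Finset.range Δ, (k : ℝ) * x ^ (k - 1) / (Nat.factorial k : ℝ) * q (k + 1)) x :=
  HasDerivAt.fun_sum fun k _ => by
    simpa using ((hasDerivAt_pow k x).div_const (Nat.factorial k : ℝ)).mul_const (q (k + 1))

lemma aux_sum_identity (Δ : ℕ) (hΔ : 1 ≤ Δ) (p q : ℕ → ℝ)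
    (hpq : ∀ k, k + 1 ≤ Δ → q (k + 1) = p (k + 1) + q (k + 2))
    (hqΔ : q (Δ + 1) = 0) (x : ℝ) :
    (∑ k ∈ Finset.range Δ, x ^ k / (Nat.factorial k : ℝ) * q (k + 1))
      - (∑ k ∈ Finset.range Δ, (k : ℝ) * x ^ (k - 1) / (Nat.factorial k : ℝ) * q (k + 1))
      = ∑ k ∈ Finset.range Δ, x ^ k / (Nat.factorial k : ℝ) * p (k + 1) := by
  obtain ⟨m, rfl⟩ : ∃ m, Δ = m + 1 := ⟨Δ - 1, (Nat.succ_pred_eq_of_pos hΔ).symm⟩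
  have h2 : (∑ k ∈ Finset.range (m + 1), (k : ℝ) * x ^ (k - 1) / (Nat.factorial k : ℝ) * q (k + 1))
      = ∑ k ∈ Finset.range (m + 1), x ^ k / (Nat.factorial k : ℝ) * q (k + 2) := by
    rw [Finset.sum_range_succ' (fun k => (k : ℝ) * x ^ (k - 1) / (Nat.factorial k : ℝ) * q (k + 1)),
      Finset.sum_range_succ (fun k => x ^ k / (Nat.factorial k : ℝ) * q (k + 2))]
    simp only [Nat.cast_zero, zero_mul, zero_div, add_zero, hqΔ, mul_zero]
    refine (Finset.sum_congr rfl fun k _ => ?_)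
    have hfac : (Nat.factorial (k + 1) : ℝ) = ((k : ℝ) + 1) * (Nat.factorial k : ℝ) := by
      push_cast [Nat.factorial_succ]; ring
    have hk : ((k : ℝ) + 1) ≠ 0 := by positivity
    have hfk : (Nat.factorial k : ℝ) ≠ 0 := Nat.cast_ne_zero.2 (Nat.factorial_ne_zero k)
    simp only [Nat.add_sub_cancel, Nat.cast_add, Nat.cast_one, hfac]
    field_simp
  rw [h2, ← Finset.sum_sub_distrib]
  refine Finset.sum_congr rfl fun k hk => ?_
  rw [hpq k (Finset.mem_range.1 hk)]
  ring

lemma aux_S_zero (Δ : ℕ) (hΔ : 1 ≤ Δ) (q : ℕ → ℝ) :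
    ∑ k ∈ Finset.range Δ, (0 : ℝ) ^ k / (Nat.factorial k : ℝ) * q (k + 1) = q 1 := by
  rw [Finset.sum_eq_single 0]
  · simp
  · intro k _ hk; simp [zero_pow hk]
  · intro h; exact absurd (Finset.mem_range.2 (by omega)) h

lemma aux_S_ge (Δ : ℕ) (hΔ : 1 ≤ Δ) (q : ℕ → ℝ) (hq0 : ∀ k, 0 ≤ q k) {x : ℝ} (hx : 0 ≤ x) :
    q 1 ≤ ∑ k ∈ Finset.range Δ, x ^ k / (Nat.factorial k : ℝ) * q (k + 1) := by
  have h0 : (0 : ℕ) ∈ Finset.range Δ := Finset.mem_range.2 (by omega)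
  calc q 1 = x ^ 0 / (Nat.factorial 0 : ℝ) * q (0 + 1) := by simp
    _ ≤ _ := Finset.single_le_sum (f := fun k => x ^ k / (Nat.factorial k : ℝ) * q (k + 1))
        (fun k _ => mul_nonneg (div_nonneg (pow_nonneg hx k) (by positivity)) (hq0 _)) h0

lemma aux_S_nonneg (Δ : ℕ) (r : ℕ → ℝ) (hr : ∀ k, 0 ≤ r k) {x : ℝ} (hx : 0 ≤ x) :
    0 ≤ ∑ k ∈ Finset.range Δ, x ^ k / (Nat.factorial k : ℝ) * r (k + 1) :=
  Finset.sum_nonneg fun k _ =>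
    mul_nonneg (div_nonneg (pow_nonneg hx k) (by positivity)) (hr _)

lemma aux_G_hasDerivAt (Δ : ℕ) (hΔ : 1 ≤ Δ) (p q : ℕ → ℝ)
    (hpq : ∀ k, k + 1 ≤ Δ → q (k + 1) = p (k + 1) + q (k + 2))
    (hqΔ : q (Δ + 1) = 0) (x : ℝ) :
    HasDerivAt
      (fun x : ℝ => Real.exp (-x) * ∑ k ∈ Finset.range Δ, x ^ k / (Nat.factorial k : ℝ) * q (k + 1))
      (-(Real.exp (-x) * ∑ k ∈ Finset.range Δ, x ^ k / (Nat.factorial k : ℝ) * p (k + 1))) x := by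
  have h1 : HasDerivAt (fun x : ℝ => Real.exp (-x)) (-Real.exp (-x)) x := by
    exact ((Real.hasDerivAt_exp (-x)).comp x (hasDerivAt_neg x)).congr_deriv (by ring)
  have h2 := aux_sum_hasDerivAt Δ q x
  have h3 := h1.mul h2
  refine h3.congr_deriv (Eq.symm ?_)
  have h4 := aux_sum_identity Δ hΔ p q hpq hqΔ x
  linear_combination Real.exp (-x) * h4

lemma aux_G_tendsto (Δ : ℕ) (q : ℕ → ℝ) :
    Tendsto (fun x : ℝ => Real.exp (-x) * ∑ k ∈ Finset.range Δ, x ^ k / (Nat.factorial k : ℝ) * q (k + 1))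
      atTop (𝓝 0) := by
  have h : ∀ x : ℝ, (∑ k ∈ Finset.range Δ, (x ^ k * Real.exp (-x)) * (q (k + 1) / (Nat.factorial k : ℝ)))
      = Real.exp (-x) * ∑ k ∈ Finset.range Δ, x ^ k / (Nat.factorial k : ℝ) * q (k + 1) := by
    intro x
    rw [Finset.mul_sum]
    exact Finset.sum_congr rfl fun k _ => by ring
  have h2 := tendsto_finset_sum (Finset.range Δ)
    (fun k (_ : k ∈ Finset.range Δ) =>
      (Real.tendsto_pow_mul_exp_neg_atTop_nhds_zero k).mul_const (q (k + 1) / (Nat.factorial k : ℝ)))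
  simp only [zero_mul, Finset.sum_const_zero] at h2
  exact h2.congr h

/-- With λ solving the IVP and f(t) := -λ''(t), we have
f(t) = λ'(t) e^{-λ(t)} Σ_{k=0}^{Δ-1} (λ(t)^k/k!) p_{k+1}, f ≥ 0, and ∫_0^∞ f = 1. -/
theorem stmt2 (Δ : ℕ) (hΔ : 2 ≤ Δ) (p q : ℕ → ℝ)
    (hp0 : ∀ k, 0 ≤ p k)
    (hsupp : ∀ k, k < 2 ∨ Δ < k → p k = 0)
    (hsum : ∑ k ∈ Finset.Icc 2 Δ, p k = 1)
    (hq : ∀ k, q k = ∑ d ∈ Finset.Icc k Δ, p d)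
    (lam lam' f : ℝ → ℝ) (hlam0 : lam 0 = 0)
    (hode : ∀ t, HasDerivAt lam (lam' t) t)
    (hlam' : ∀ t, lam' t = Real.exp (-(lam t)) *
        ∑ k ∈ Finset.range Δ, lam t ^ k / (Nat.factorial k : ℝ) * q (k + 1))
    (hf : ∀ t, HasDerivAt lam' (-(f t)) t) :
    (∀ t, 0 ≤ t → f t = lam' t * Real.exp (-(lam t)) *
        ∑ k ∈ Finset.range Δ, lam t ^ k / (Nat.factorial k : ℝ) * p (k + 1)) ∧
    (∀ t, 0 ≤ t → 0 ≤ f t) ∧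
    (∫ t in Set.Ioi (0 : ℝ), f t) = 1 := by
  have hΔ1 : 1 ≤ Δ := le_trans one_le_two hΔ
  have hicc : ∀ a : ℕ, a ≤ Δ → Finset.Icc a Δ = insert a (Finset.Icc (a + 1) Δ) := by
    intro a ha
    ext x
    simp only [Finset.mem_Icc, Finset.mem_insert]
    omega
  have hq0 : ∀ k, 0 ≤ q k := fun k => by
    rw [hq]; exact Finset.sum_nonneg fun d _ => hp0 d
  have hqΔ : q (Δ + 1) = 0 := by
    rw [hq, Finset.Icc_eq_empty (by omega), Finset.sum_empty]
  have hpq : ∀ k, k + 1 ≤ Δ → q (k + 1) = p (k + 1) + q (k + 2) := by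
    intro k hk
    rw [hq (k + 1), hq (k + 2), hicc (k + 1) hk, Finset.sum_insert (by simp)]
  have hq1 : q 1 = 1 := by
    rw [hq, hicc 1 hΔ1, Finset.sum_insert (by simp), hsupp 1 (Or.inl one_lt_two), hsum, zero_add]
  -- lam' at points where lam vanishes
  have hlam'zero : ∀ t, lam t = 0 → lam' t = 1 := by
    intro t ht
    rw [hlam' t, ht, aux_S_zero Δ hΔ1 q, hq1]
    simp
  -- formula for f (for all t)
  have hfderiv : ∀ t, HasDerivAt lam'
      (-(Real.exp (-(lam t)) * ∑ k ∈ Finset.range Δ,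
          lam t ^ k / (Nat.factorial k : ℝ) * p (k + 1)) * lam' t) t := by
    intro t
    have h := (aux_G_hasDerivAt Δ hΔ1 p q hpq hqΔ (lam t)).comp t (hode t)
    have h2 : ((fun x : ℝ => Real.exp (-x) *
        ∑ k ∈ Finset.range Δ, x ^ k / (Nat.factorial k : ℝ) * q (k + 1)) ∘ lam) = lam' :=
      funext fun u => (hlam' u).symm
    rwa [h2] at h
  have hfeq : ∀ t, f t = lam' t * Real.exp (-(lam t)) *
      ∑ k ∈ Finset.range Δ, lam t ^ k / (Nat.factorial k : ℝ) * p (k + 1) := by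
    intro t
    have h := (hf t).unique (hfderiv t)
    linear_combination -h
  -- continuity of lam
  have hlamcont : Continuous lam := continuous_iff_continuousAt.2 fun t => (hode t).continuousAt
  -- behaviour near a zero of lam
  have hstart : ∀ s : ℝ, lam s = 0 →
      ∀ᶠ u in 𝓝[≠] s, (u < s → lam u < 0) ∧ (s < u → 0 < lam u) := by
    intro s hs
    have hd : HasDerivAt lam 1 s := by
      have h := hode s; rwa [hlam'zero s hs] at h
    have hslope := hasDerivAt_iff_tendsto_slope.1 hd
    have hpos : ∀ᶠ u in 𝓝[≠] s, 0 < slope lam s u := hslope (Ioi_mem_nhds one_pos)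
    filter_upwards [hpos] with u hu
    rw [slope_def_field, div_pos_iff] at hu
    constructor
    · intro hus
      rcases hu with ⟨h1, h2⟩ | ⟨h1, h2⟩
      · linarith
      · rw [hs] at h1; linarith
    · intro hsu
      rcases hu with ⟨h1, h2⟩ | ⟨h1, h2⟩
      · rw [hs] at h1; linarith
      · linarith
  -- nonnegativity of lam on [0, ∞)
  have hlam_nonneg : ∀ t : ℝ, 0 ≤ t → 0 ≤ lam t := by
    intro t₁ ht₁0
    by_contra hneg
    push_neg at hneg
    have ht₁pos : 0 < t₁ := by
      rcases eq_or_lt_of_le ht₁0 with h | h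
      · rw [← h, hlam0] at hneg; exact absurd hneg (lt_irrefl 0)
      · exact h
    set A := {u : ℝ | u ∈ Set.Icc 0 t₁ ∧ lam u < 0} with hA
    have hAne : A.Nonempty := ⟨t₁, ⟨le_of_lt ht₁pos, le_refl t₁⟩, hneg⟩
    have hAbdd : BddBelow A := ⟨0, fun u hu => hu.1.1⟩
    set s := sInf A with hsdef
    have hs0 : 0 ≤ s := le_csInf hAne fun u hu => hu.1.1
    have hst₁ : s ≤ t₁ := csInf_le hAbdd ⟨⟨le_of_lt ht₁pos, le_refl t₁⟩, hneg⟩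
    -- s is positive
    have hspos : 0 < s := by
      have h0 := hstart 0 hlam0
      rw [eventually_nhdsWithin_iff, Metric.eventually_nhds_iff] at h0
      obtain ⟨ε, hε, hball⟩ := h0
      refine lt_of_lt_of_le hε (le_csInf hAne fun u hu => ?_)
      by_contra hcon
      push_neg at hcon
      have hu0 : 0 < u := by
        rcases eq_or_lt_of_le hu.1.1 with h | h
        · exfalso
          have hlu : lam u < 0 := hu.2
          rw [← h, hlam0] at hlu
          exact lt_irrefl 0 hlu
        · exact h
      have hdist : dist u 0 < ε := by
        rw [Real.dist_eq, sub_zero, abs_of_pos hu0]; exact hcon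
      have hpos := (hball hdist (Set.mem_compl_singleton_iff.2 hu0.ne')).2 hu0
      linarith [hu.2]
    -- lam is nonneg on [0, s)
    have hbefore : ∀ u, 0 ≤ u → u < s → 0 ≤ lam u := by
      intro u hu0 hus
      by_contra hcon
      push_neg at hcon
      exact absurd (csInf_le hAbdd ⟨⟨hu0, le_of_lt (lt_of_lt_of_le hus hst₁)⟩, hcon⟩)
        (not_le.2 hus)
    -- lam s ≤ 0
    have hle : lam s ≤ 0 := by
      have hclos : s ∈ closure A := csInf_mem_closure hAne hAbdd
      have hsub : closure A ⊆ {u : ℝ | lam u ≤ 0} := by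
        apply closure_minimal
        · exact fun u hu => le_of_lt hu.2
        · exact isClosed_le (by fun_prop) continuous_const
      exact hsub hclos
    -- lam s ≥ 0
    have hge : 0 ≤ lam s := by
      have htend : Tendsto lam (𝓝[<] s) (𝓝 (lam s)) :=
        (hlamcont.continuousAt (x := s)).continuousWithinAt
      refine ge_of_tendsto htend ?_
      filter_upwards [Ioo_mem_nhdsLT hspos] with u hu
      exact hbefore u (le_of_lt hu.1) hu.2
    have hseq : lam s = 0 := le_antisymm hle hge
    -- contradiction: points just below s have lam < 0
    have hev : ∀ᶠ u in 𝓝[<] s, (u < s → lam u < 0) ∧ (s < u → 0 < lam u) :=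
      nhdsWithin_mono s (fun u (hu : u ∈ Iio s) => ne_of_lt hu) (hstart s hseq)
    have hev2 : ∀ᶠ u in 𝓝[<] s, u ∈ Ioo 0 s := Ioo_mem_nhdsLT hspos
    obtain ⟨u, hu1, hu2⟩ := (hev.and hev2).exists
    have := hu1.1 hu2.2
    have := hbefore u (le_of_lt hu2.1) hu2.2
    linarith
  -- positivity of lam'
  have hlam'pos : ∀ t : ℝ, 0 ≤ t → 0 < lam' t := by
    intro t ht
    rw [hlam' t]
    have h1 : (1 : ℝ) ≤ ∑ k ∈ Finset.range Δ, lam t ^ k / (Nat.factorial k : ℝ) * q (k + 1) := by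
      rw [← hq1]; exact aux_S_ge Δ hΔ1 q hq0 (hlam_nonneg t ht)
    nlinarith [Real.exp_pos (-(lam t))]
  -- nonnegativity of f
  have hfnn : ∀ t : ℝ, 0 ≤ t → 0 ≤ f t := by
    intro t ht
    rw [hfeq t]
    have h1 := aux_S_nonneg Δ p hp0 (hlam_nonneg t ht)
    have h2 := (hlam'pos t ht).le
    have h3 := (Real.exp_pos (-(lam t))).le
    positivity
  -- monotonicity of lam on [0, ∞)
  have hmono : MonotoneOn lam (Set.Ici 0) := by
    apply monotoneOn_of_deriv_nonneg (convex_Ici 0) hlamcont.continuousOn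
      (fun x _ => (hode x).differentiableAt.differentiableWithinAt)
    intro x hx
    rw [interior_Ici] at hx
    rw [(hode x).deriv]
    exact (hlam'pos x (le_of_lt hx)).le
  -- lam is unbounded on [0, ∞)
  have hunb : ∀ M : ℝ, ∃ t, 0 ≤ t ∧ M < lam t := by
    intro M
    by_contra h
    push_neg at h
    have hM0 : 0 ≤ M := by have := h 0 le_rfl; rwa [hlam0] at this
    have hge : ∀ x ∈ interior (Set.Ici (0 : ℝ)), Real.exp (-M) ≤ deriv lam x := by
      intro x hx
      rw [interior_Ici] at hx
      rw [(hode x).deriv, hlam' x]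
      have h1 : Real.exp (-M) ≤ Real.exp (-(lam x)) :=
        Real.exp_le_exp.2 (by linarith [h x (le_of_lt hx)])
      have h2 : (1 : ℝ) ≤ ∑ k ∈ Finset.range Δ, lam x ^ k / (Nat.factorial k : ℝ) * q (k + 1) := by
        rw [← hq1]; exact aux_S_ge Δ hΔ1 q hq0 (hlam_nonneg x (le_of_lt hx))
      nlinarith [Real.exp_pos (-(lam x))]
    set T : ℝ := (M + 1) * Real.exp M with hT
    have hT0 : 0 ≤ T := by positivity
    have hmvt := (convex_Ici (0 : ℝ)).mul_sub_le_image_sub_of_le_deriv hlamcont.continuousOn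
      (fun x _ => (hode x).differentiableAt.differentiableWithinAt) hge
      0 self_mem_Ici T (mem_Ici.2 hT0) hT0
    rw [hlam0, sub_zero, sub_zero] at hmvt
    have hexp : Real.exp (-M) * T = M + 1 := by
      rw [hT, Real.exp_neg]
      field_simp
    have := h T hT0
    rw [hexp] at hmvt
    linarith
  have htop : Tendsto lam atTop atTop := by
    rw [tendsto_atTop_atTop]
    intro b
    obtain ⟨t₀, ht₀, hb⟩ := hunb b
    exact ⟨t₀, fun t ht => le_of_lt (lt_of_lt_of_le hb
      (hmono (mem_Ici.2 ht₀) (mem_Ici.2 (le_trans ht₀ ht)) ht))⟩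
  have hlam'tends : Tendsto lam' atTop (𝓝 0) := by
    have h := (aux_G_tendsto Δ q).comp htop
    exact h.congr fun t => (hlam' t).symm
  -- the integral
  have hint := integral_Ioi_of_hasDerivAt_of_nonneg (a := (0 : ℝ))
    (g := fun t => -(lam' t)) (g' := f)
    ((hf 0).continuousAt.neg.continuousWithinAt)
    (fun x _ => (hf x).neg.congr_deriv (neg_neg _))
    (fun x hx => hfnn x (le_of_lt hx))
    (by simpa using hlam'tends.neg)
  simp only [zero_sub, neg_neg] at hint
  rw [hlam'zero 0 hlam0] at hint
  exact ⟨fun t _ => hfeq t, hfnn, hint⟩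
end

section
/- Define H(t) := λ'(t) e^{-λ(t)} Σ_{k=0}^∞ (λ(t)^k/k!) p_{k+2}, where λ solves the IVP above and (p_k) is a probability distribution on {2,...,Δ} with p_k = 0 for k ∉ [2,Δ]. Then H(t) = d/dt [ 1 - e^{-λ(t)} Σ_{k=0}^∞ (λ(t)^k/k!) q_{k+2} ], H is nonnegative, 0 ≤ H(t) ≤ 1 for all t ≥ 0, and ∫_0^∞ H(s) ds = 1. -/
open Filter MeasureTheory Finset

private lemma expPolyDeriv (n : ℕ) (c : ℕ → ℝ) (x : ℝ) :
    HasDerivAt (fun y : ℝ => Real.exp (-y) * ∑ k ∈ range n, y ^ k / (Nat.factorial k : ℝ) * c k)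
      (Real.exp (-x) * ((∑ k ∈ range n, (k : ℝ) * x ^ (k - 1) / (Nat.factorial k : ℝ) * c k)
        - ∑ k ∈ range n, x ^ k / (Nat.factorial k : ℝ) * c k)) x := by
  have h1 : HasDerivAt (fun y : ℝ => Real.exp (-y)) (-Real.exp (-x)) x := by
    simpa using (hasDerivAt_neg x).exp
  have h2 : HasDerivAt (fun y : ℝ => ∑ k ∈ range n, y ^ k / (Nat.factorial k : ℝ) * c k)
      (∑ k ∈ range n, (k : ℝ) * x ^ (k - 1) / (Nat.factorial k : ℝ) * c k) x := by
    apply HasDerivAt.fun_sum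
    intro k _
    simpa [mul_div_assoc] using ((hasDerivAt_pow k x).div_const (Nat.factorial k : ℝ)).mul_const (c k)
  have h3 := h1.mul h2
  exact h3.congr_deriv (by ring)

/-- For H(t) := λ'(t) e^{-λ(t)} Σ_{k≥0} (λ(t)^k/k!) p_{k+2}:
H(t) = d/dt [1 - e^{-λ(t)} Σ_{k≥0} (λ(t)^k/k!) q_{k+2}], 0 ≤ H(t) ≤ 1, and ∫_0^∞ H = 1. -/
theorem stmt4 (Δ : ℕ) (hΔ : 2 ≤ Δ) (p q : ℕ → ℝ)
    (hp0 : ∀ k, 0 ≤ p k)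
    (hsupp : ∀ k, k < 2 ∨ Δ < k → p k = 0)
    (hsum : ∑ k ∈ Finset.Icc 2 Δ, p k = 1)
    (hq : ∀ k, q k = ∑ d ∈ Finset.Icc k Δ, p d)
    (lam lam' : ℝ → ℝ) (hlam0 : lam 0 = 0)
    (hode : ∀ t, HasDerivAt lam (lam' t) t)
    (hlam' : ∀ t, lam' t = Real.exp (-(lam t)) *
        ∑ k ∈ Finset.range Δ, lam t ^ k / (Nat.factorial k : ℝ) * q (k + 1))
    (H : ℝ → ℝ)
    (hH : ∀ t, H t = lam' t * Real.exp (-(lam t)) *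
        ∑' k : ℕ, lam t ^ k / (Nat.factorial k : ℝ) * p (k + 2)) :
    (∀ t, 0 ≤ t → HasDerivAt
        (fun s => 1 - Real.exp (-(lam s)) * ∑' k : ℕ, lam s ^ k / (Nat.factorial k : ℝ) * q (k + 2))
        (H t) t) ∧
    (∀ t, 0 ≤ t → 0 ≤ H t ∧ H t ≤ 1) ∧
    (∫ s in Set.Ioi (0 : ℝ), H s) = 1 := by
  -- basic facts about q
  have hq0 : ∀ k, Δ < k → q k = 0 := by
    intro k hk
    rw [hq, Finset.Icc_eq_empty (by omega), Finset.sum_empty]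
  have hqnonneg : ∀ k, 0 ≤ q k := by
    intro k; rw [hq]; exact Finset.sum_nonneg fun d _ => hp0 d
  have hqone : ∀ k, k ≤ 2 → q k = 1 := by
    intro k hk
    rw [hq, ← hsum]
    exact (Finset.sum_subset (Finset.Icc_subset_Icc_left hk)
      (fun x hx hnx => hsupp x (by simp [Finset.mem_Icc] at hx hnx; omega))).symm
  have hqle1 : ∀ k, q k ≤ 1 := by
    intro k
    rcases le_or_gt k 2 with h | h
    · exact le_of_eq (hqone k h)
    · rw [hq, ← hsum]
      exact Finset.sum_le_sum_of_subset_of_nonneg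
        (Finset.Icc_subset_Icc_left h.le) (fun i _ _ => hp0 i)
  have hple1 : ∀ k, p k ≤ 1 := by
    intro k
    rcases le_or_gt k Δ with h | h
    · calc p k ≤ ∑ d ∈ Finset.Icc k Δ, p d :=
            Finset.single_le_sum (fun i _ => hp0 i) (by simp [Finset.mem_Icc, h])
        _ = q k := (hq k).symm
        _ ≤ 1 := hqle1 k
    · rw [hsupp k (Or.inr h)]; norm_num
  have hpq : ∀ k : ℕ, q (k + 2) - q (k + 3) = p (k + 2) := by
    intro k
    rcases le_or_gt (k + 2) Δ with h | h
    · rw [hq, hq]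
      have hins : Finset.Icc (k + 2) Δ = insert (k + 2) (Finset.Icc (k + 3) Δ) := by
        ext x; simp [Finset.mem_Icc]; omega
      rw [hins, Finset.sum_insert (by simp [Finset.mem_Icc])]
      ring
    · rw [hq0 _ h, hq0 _ (by omega), hsupp (k + 2) (Or.inr h)]; ring
  -- tsum to finite sum
  have htp : ∀ x : ℝ, (∑' k : ℕ, x ^ k / (Nat.factorial k : ℝ) * p (k + 2))
      = ∑ k ∈ range (Δ - 1), x ^ k / (Nat.factorial k : ℝ) * p (k + 2) := by
    intro x
    apply tsum_eq_sum
    intro k hk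
    rw [hsupp (k + 2) (Or.inr (by simp [Finset.mem_range] at hk; omega)), mul_zero]
  have htq : ∀ x : ℝ, (∑' k : ℕ, x ^ k / (Nat.factorial k : ℝ) * q (k + 2))
      = ∑ k ∈ range (Δ - 1), x ^ k / (Nat.factorial k : ℝ) * q (k + 2) := by
    intro x
    apply tsum_eq_sum
    intro k hk
    rw [hq0 (k + 2) (by simp [Finset.mem_range] at hk; omega), mul_zero]
  -- continuity of lam
  have hlamcont : Continuous lam :=
    continuous_iff_continuousAt.mpr fun t => (hode t).continuousAt
  -- lam is nonnegative on [0, ∞)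
  have hq1 : q 1 = 1 := hqone 1 (by omega)
  have hlam'at0 : ∀ s, lam s = 0 → lam' s = 1 := by
    intro s hs
    rw [hlam' s, hs]
    rw [Finset.sum_eq_single_of_mem 0 (Finset.mem_range.mpr (by omega))]
    · simp [hq1]
    · intro k _ hk
      simp [zero_pow hk]
  have hlamnonneg : ∀ t : ℝ, 0 ≤ t → 0 ≤ lam t := by
    intro t ht
    by_contra hneg
    push_neg at hneg
    have ht0 : (0 : ℝ) < t := by
      rcases ht.lt_or_eq with h | h
      · exact h
      · exact absurd hneg (by rw [← h, hlam0]; exact lt_irrefl 0)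
    set S := {u : ℝ | u ∈ Set.Icc 0 t ∧ 0 ≤ lam u} with hSdef
    have h0S : (0 : ℝ) ∈ S := ⟨⟨le_refl 0, ht⟩, by rw [hlam0]⟩
    have hScl : IsClosed S := by
      have : S = Set.Icc 0 t ∩ lam ⁻¹' Set.Ici 0 := rfl
      rw [this]
      exact isClosed_Icc.inter (isClosed_Ici.preimage hlamcont)
    have hSbdd : BddAbove S := ⟨t, fun u hu => hu.1.2⟩
    set s := sSup S with hsdef
    have hsS : s ∈ S := hScl.csSup_mem ⟨0, h0S⟩ hSbdd
    have hst : s < t := by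
      rcases (hsS.1.2).lt_or_eq with h | h
      · exact h
      · exact absurd (h ▸ hsS.2) (not_le.mpr hneg)
    have hnotS : ∀ u, u ∈ Set.Ioc s t → lam u < 0 := by
      intro u hu
      by_contra hc
      push_neg at hc
      have huS : u ∈ S := ⟨⟨le_trans hsS.1.1 hu.1.le, hu.2⟩, hc⟩
      exact absurd (le_csSup hSbdd huS) (not_le.mpr hu.1)
    have hlams0 : lam s = 0 := by
      refine le_antisymm ?_ hsS.2
      refine le_of_tendsto ((hlamcont.tendsto s).mono_left nhdsWithin_le_nhds :
        Tendsto lam (nhdsWithin s (Set.Ioi s)) (nhds (lam s))) ?_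
      filter_upwards [Ioc_mem_nhdsGT_of_mem (⟨le_rfl, hst⟩ : s ∈ Set.Ico s t)] with u hu
      exact (hnotS u hu).le
    have hslope : Tendsto (slope lam s) (nhdsWithin s (Set.Ioi s)) (nhds 1) := by
      have := (hasDerivAt_iff_tendsto_slope.mp (hode s))
      rw [hlam'at0 s hlams0] at this
      exact this.mono_left (nhdsWithin_mono s fun x hx => ne_of_gt hx)
    have hev : ∀ᶠ u in nhdsWithin s (Set.Ioi s), 0 < slope lam s u :=
      hslope.eventually (eventually_gt_nhds (by norm_num : (0:ℝ) < 1))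
    have hev2 : ∀ᶠ u in nhdsWithin s (Set.Ioi s), u ∈ Set.Ioc s t :=
      Filter.eventually_of_mem (Ioc_mem_nhdsGT_of_mem (⟨le_rfl, hst⟩ : s ∈ Set.Ico s t))
        (fun u hu => hu)
    obtain ⟨u, hu1, hu2⟩ := (hev.and hev2).exists
    have : 0 < lam u - lam s := by
      have h3 := mul_pos hu1 (sub_pos.mpr hu2.1)
      rwa [slope_def_field, div_mul_cancel₀ _ (sub_ne_zero.mpr (ne_of_gt hu2.1))] at h3
    rw [hlams0, sub_zero] at this
    exact absurd this (not_lt.mpr (hnotS u hu2).le)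
  -- bounds on lam'
  have hlam'le1 : ∀ t : ℝ, 0 ≤ lam t → lam' t ≤ 1 := by
    intro t ht
    rw [hlam' t]
    have h1 : (∑ k ∈ range Δ, lam t ^ k / (Nat.factorial k : ℝ) * q (k + 1))
        ≤ ∑ k ∈ range Δ, lam t ^ k / (Nat.factorial k : ℝ) := by
      apply Finset.sum_le_sum
      intro k _
      exact mul_le_of_le_one_right (div_nonneg (pow_nonneg ht k) (Nat.cast_nonneg _))
        (hqle1 (k + 1))
    have h2 := Real.sum_le_exp_of_nonneg ht Δ
    calc Real.exp (-(lam t)) * ∑ k ∈ range Δ, lam t ^ k / (Nat.factorial k : ℝ) * q (k + 1)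
        ≤ Real.exp (-(lam t)) * Real.exp (lam t) := by
          apply mul_le_mul_of_nonneg_left (h1.trans (by simpa using h2)) (Real.exp_nonneg _)
      _ = 1 := by rw [← Real.exp_add]; simp
  have hlam'nonneg : ∀ t : ℝ, 0 ≤ lam t → 0 ≤ lam' t := by
    intro t ht
    rw [hlam' t]
    apply mul_nonneg (Real.exp_nonneg _)
    apply Finset.sum_nonneg
    intro k _
    have : (0:ℝ) ≤ lam t ^ k / (Nat.factorial k : ℝ) := by positivity
    exact mul_nonneg this (hqnonneg _)
  have hlam'ge : ∀ t : ℝ, 0 ≤ lam t → Real.exp (-(lam t)) ≤ lam' t := by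
    intro t ht
    rw [hlam' t]
    have h1 : (1:ℝ) ≤ ∑ k ∈ range Δ, lam t ^ k / (Nat.factorial k : ℝ) * q (k + 1) := by
      have := Finset.single_le_sum (f := fun k => lam t ^ k / (Nat.factorial k : ℝ) * q (k + 1))
        (fun k _ => mul_nonneg (by positivity) (hqnonneg _)) (Finset.mem_range.mpr (by omega : 0 < Δ))
      simpa [hq1] using this
    nlinarith [Real.exp_pos (-(lam t))]
  -- the derivative statement with finite sums
  set m := Δ - 2 with hm
  have hΔ1 : Δ - 1 = m + 1 := by omega
  have hBA : ∀ x : ℝ,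
      (∑ k ∈ range (Δ - 1), x ^ k / (Nat.factorial k : ℝ) * q (k + 2))
      - (∑ k ∈ range (Δ - 1), (k : ℝ) * x ^ (k - 1) / (Nat.factorial k : ℝ) * q (k + 2))
      = ∑ k ∈ range (Δ - 1), x ^ k / (Nat.factorial k : ℝ) * p (k + 2) := by
    intro x
    rw [hΔ1]
    have hA : (∑ k ∈ range (m + 1), (k : ℝ) * x ^ (k - 1) / (Nat.factorial k : ℝ) * q (k + 2))
        = ∑ k ∈ range (m + 1), x ^ k / (Nat.factorial k : ℝ) * q (k + 3) := by
      rw [Finset.sum_range_succ' (fun k => (k : ℝ) * x ^ (k - 1) / (Nat.factorial k : ℝ) * q (k + 2))]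
      rw [Finset.sum_range_succ (fun k => x ^ k / (Nat.factorial k : ℝ) * q (k + 3))]
      have hqz : q (m + 3) = 0 := hq0 _ (by omega)
      rw [hqz]
      simp only [Nat.cast_zero, zero_mul, zero_div, mul_zero, add_zero, Nat.succ_sub_one]
      apply Finset.sum_congr rfl
      intro i _
      have : (Nat.factorial (i + 1) : ℝ) = (i + 1 : ℝ) * (Nat.factorial i : ℝ) := by
        rw [Nat.factorial_succ]; push_cast; ring
      rw [this]
      have h1 : (Nat.factorial i : ℝ) ≠ 0 := Nat.cast_ne_zero.mpr (Nat.factorial_ne_zero i)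
      have h2 : (i + 1 : ℝ) ≠ 0 := by positivity
      field_simp
      push_cast
      ring
    rw [hA, ← Finset.sum_sub_distrib]
    apply Finset.sum_congr rfl
    intro k _
    rw [← hpq k]
    ring
  have hderivF : ∀ t : ℝ, HasDerivAt
      (fun s => 1 - Real.exp (-(lam s)) * ∑ k ∈ range (Δ - 1),
        lam s ^ k / (Nat.factorial k : ℝ) * q (k + 2)) (H t) t := by
    intro t
    have hG := expPolyDeriv (Δ - 1) (fun k => q (k + 2)) (lam t)
    have hcomp := hG.comp t (hode t)
    have := hcomp.const_sub 1
    refine this.congr_deriv ?_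
    rw [hH t, htp]
    rw [← hBA (lam t)]
    ring
  -- lam tends to infinity
  have hexpge : ∀ t : ℝ, 0 ≤ t → 1 + t ≤ Real.exp (lam t) := by
    intro t ht
    set φ := fun s : ℝ => Real.exp (lam s) - (1 + s) with hφ
    have hφderiv : ∀ s : ℝ, HasDerivAt φ (lam' s * Real.exp (lam s) - 1) s := by
      intro s
      have h1 := (hode s).exp
      have h2 : HasDerivAt (fun u : ℝ => 1 + u) 1 s := by
        simpa using (hasDerivAt_id s).const_add (1:ℝ)
      exact (h1.sub h2).congr_deriv (by ring)
    have hmono : MonotoneOn φ (Set.Ici 0) := by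
      apply monotoneOn_of_deriv_nonneg (convex_Ici 0)
      · exact ((Real.continuous_exp.comp hlamcont).sub
          (continuous_const.add continuous_id)).continuousOn
      · intro x hx
        exact (hφderiv x).differentiableAt.differentiableWithinAt
      · intro x hx
        rw [(hφderiv x).deriv]
        rw [interior_Ici] at hx
        have hx0 : 0 ≤ lam x := hlamnonneg x (le_of_lt hx)
        have h3 := hlam'ge x hx0
        have h4 : Real.exp (-(lam x)) * Real.exp (lam x) = 1 := by
          rw [← Real.exp_add]; simp
        nlinarith [Real.exp_pos (lam x)]
    have h0 : φ 0 = 0 := by simp [hφ, hlam0]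
    have := hmono (Set.self_mem_Ici) (Set.mem_Ici.mpr ht) ht
    rw [h0] at this
    simpa [hφ] using this
  have hlamtop : Tendsto lam atTop atTop := by
    apply tendsto_atTop_mono' atTop (_ : ∀ᶠ t in atTop, Real.log (1 + t) ≤ lam t)
    · exact Real.tendsto_log_atTop.comp (tendsto_atTop_add_const_left _ 1 tendsto_id)
    · filter_upwards [eventually_ge_atTop (0:ℝ)] with t ht
      rw [Real.log_le_iff_le_exp (by linarith)]
      exact hexpge t ht
  -- H bounds
  have hHbounds : ∀ t : ℝ, 0 ≤ t → 0 ≤ H t ∧ H t ≤ 1 := by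
    intro t ht
    have hlt := hlamnonneg t ht
    rw [hH t, htp]
    constructor
    · apply mul_nonneg (mul_nonneg (hlam'nonneg t hlt) (Real.exp_nonneg _))
      apply Finset.sum_nonneg
      intro k _
      exact mul_nonneg (by positivity) (hp0 _)
    · have h1 : (∑ k ∈ range (Δ - 1), lam t ^ k / (Nat.factorial k : ℝ) * p (k + 2))
          ≤ Real.exp (lam t) := by
        calc (∑ k ∈ range (Δ - 1), lam t ^ k / (Nat.factorial k : ℝ) * p (k + 2))
            ≤ ∑ k ∈ range (Δ - 1), lam t ^ k / (Nat.factorial k : ℝ) := by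
              apply Finset.sum_le_sum
              intro k _
              simpa using mul_le_of_le_one_right
                (by positivity : (0:ℝ) ≤ lam t ^ k / (Nat.factorial k : ℝ)) (hple1 (k + 2))
          _ ≤ Real.exp (lam t) := by simpa using Real.sum_le_exp_of_nonneg hlt (Δ - 1)
      have h2 : Real.exp (-(lam t)) * (∑ k ∈ range (Δ - 1),
          lam t ^ k / (Nat.factorial k : ℝ) * p (k + 2)) ≤ 1 := by
        have h4 : Real.exp (-(lam t)) * Real.exp (lam t) = 1 := by
          rw [← Real.exp_add]; simp
        nlinarith [Real.exp_pos (-(lam t)), Real.exp_pos (lam t),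
          mul_le_mul_of_nonneg_left h1 (Real.exp_nonneg (-(lam t)))]
      calc lam' t * Real.exp (-(lam t)) * (∑ k ∈ range (Δ - 1),
            lam t ^ k / (Nat.factorial k : ℝ) * p (k + 2))
          = lam' t * (Real.exp (-(lam t)) * ∑ k ∈ range (Δ - 1),
            lam t ^ k / (Nat.factorial k : ℝ) * p (k + 2)) := by ring
        _ ≤ 1 * 1 := by
            apply mul_le_mul (hlam'le1 t hlt) h2 ?_ zero_le_one
            apply mul_nonneg (Real.exp_nonneg _)
            apply Finset.sum_nonneg fun k _ => mul_nonneg (by positivity) (hp0 _)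
        _ = 1 := by ring
  -- the integral
  have hfun : (fun s => 1 - Real.exp (-(lam s)) *
      ∑' k : ℕ, lam s ^ k / (Nat.factorial k : ℝ) * q (k + 2))
      = (fun s => 1 - Real.exp (-(lam s)) * ∑ k ∈ range (Δ - 1),
        lam s ^ k / (Nat.factorial k : ℝ) * q (k + 2)) := by
    funext s; rw [htq]
  refine ⟨fun t _ => by rw [hfun]; exact hderivF t, hHbounds, ?_⟩
  have hGtend : Tendsto (fun x : ℝ => Real.exp (-x) * ∑ k ∈ range (Δ - 1),
      x ^ k / (Nat.factorial k : ℝ) * q (k + 2)) atTop (nhds 0) := by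
    have heq : (fun x : ℝ => Real.exp (-x) * ∑ k ∈ range (Δ - 1),
        x ^ k / (Nat.factorial k : ℝ) * q (k + 2))
        = fun x : ℝ => ∑ k ∈ range (Δ - 1),
          (q (k + 2) / (Nat.factorial k : ℝ)) * (x ^ k * Real.exp (-x)) := by
      funext x
      rw [Finset.mul_sum]
      apply Finset.sum_congr rfl
      intro k _
      ring
    rw [heq]
    have : (0:ℝ) = ∑ k ∈ range (Δ - 1), (q (k + 2) / (Nat.factorial k : ℝ)) * 0 := by simp
    rw [this]
    apply tendsto_finset_sum
    intro k _
    exact Tendsto.const_mul _ (Real.tendsto_pow_mul_exp_neg_atTop_nhds_zero k)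
  have htend : Tendsto (fun s => 1 - Real.exp (-(lam s)) * ∑ k ∈ range (Δ - 1),
      lam s ^ k / (Nat.factorial k : ℝ) * q (k + 2)) atTop (nhds 1) := by
    have := (hGtend.comp hlamtop).const_sub 1
    simpa using this
  have hval0 : (1 : ℝ) - Real.exp (-(lam 0)) * ∑ k ∈ range (Δ - 1),
      lam 0 ^ k / (Nat.factorial k : ℝ) * q (k + 2) = 0 := by
    rw [hlam0]
    rw [Finset.sum_eq_single_of_mem 0 (Finset.mem_range.mpr (by omega))]
    · simp [hqone 2 le_rfl]
    · intro k _ hk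
      simp [zero_pow hk]
  have hint := integral_Ioi_of_hasDerivAt_of_nonneg' (a := (0:ℝ))
    (g := fun s => 1 - Real.exp (-(lam s)) * ∑ k ∈ range (Δ - 1),
      lam s ^ k / (Nat.factorial k : ℝ) * q (k + 2)) (g' := H) (l := 1)
    (fun x hx => hderivF x) (fun x hx => (hHbounds x (le_of_lt hx)).1) htend
  rw [hint]
  have hb : (fun s => 1 - Real.exp (-(lam s)) * ∑ k ∈ range (Δ - 1),
      lam s ^ k / (Nat.factorial k : ℝ) * q (k + 2)) 0 = 0 := hval0
  rw [hval0, sub_zero]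
end

section
/- Let F(t) := ∫_0^t (λ'(s))² ds, where λ solves the IVP λ'(t) = e^{-λ(t)} Σ_{k=0}^{Δ-1} (λ(t)^k/k!) q_{k+1}, λ(0)=0. Then F is continuous, strictly increasing on ℝ≥0, F(0)=0, and lim_{t→∞} F(t) = E(D) = Σ_{k=2}^Δ k·p_k. Consequently F has an inverse F^{-1} : [0, E(D)) → ℝ≥0 which is continuous, strictly increasing, and satisfies F^{-1}(s) → ∞ as s → E(D). -/
open Filter MeasureTheory

lemma expPoly_hasDerivAt (k : ℕ) (x : ℝ) :
    HasDerivAt (fun y => Real.exp (-y) * ∑ j ∈ Finset.range (k+1), y ^ j / (Nat.factorial j : ℝ))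
      (-(Real.exp (-x) * x ^ k / (Nat.factorial k : ℝ))) x := by
  induction k with
  | zero =>
      have h : (fun y : ℝ => Real.exp (-y) * ∑ j ∈ Finset.range 1, y ^ j / (Nat.factorial j : ℝ))
          = fun y => Real.exp (-y) := by
        funext y; simp
      rw [h]
      have := (Real.hasDerivAt_exp (-x)).comp x (hasDerivAt_neg x)
      exact ((hasDerivAt_neg x).exp).congr_deriv (by simp)
  | succ k ih =>
      have hsplit : (fun y : ℝ => Real.exp (-y) * ∑ j ∈ Finset.range (k+2), y ^ j / (Nat.factorial j : ℝ))
          = fun y => (Real.exp (-y) * ∑ j ∈ Finset.range (k+1), y ^ j / (Nat.factorial j : ℝ))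
              + Real.exp (-y) * (y ^ (k+1) / (Nat.factorial (k+1) : ℝ)) := by
        funext y
        rw [Finset.sum_range_succ]
        ring
      rw [hsplit]
      have hexp : HasDerivAt (fun y : ℝ => Real.exp (-y)) (-Real.exp (-x)) x := by
        simpa using (hasDerivAt_neg x).exp
      have hpow : HasDerivAt (fun y : ℝ => y ^ (k+1) / (Nat.factorial (k+1) : ℝ))
          (((k+1 : ℕ) : ℝ) * x ^ k / (Nat.factorial (k+1) : ℝ)) x := by
        simpa using (hasDerivAt_pow (k+1) x).div_const (Nat.factorial (k+1) : ℝ)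
      have hterm := hexp.mul hpow
      have := ih.add hterm
      refine this.congr_deriv ?_
      have hfk : (Nat.factorial (k+1) : ℝ) = ((k+1 : ℕ) : ℝ) * (Nat.factorial k : ℝ) := by
        rw [Nat.factorial_succ]; push_cast; ring
      have h1 : (Nat.factorial k : ℝ) ≠ 0 := Nat.cast_ne_zero.2 (Nat.factorial_ne_zero k)
      have h2 : ((k+1 : ℕ) : ℝ) ≠ 0 := by positivity
      rw [hfk]
      field_simp
      ring

lemma exists_inverse (F : ℝ → ℝ) (E : ℝ)
    (hmono : StrictMonoOn F (Set.Ici 0))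
    (hcont : ContinuousOn F (Set.Ici 0))
    (hF0 : F 0 = 0)
    (htend : Tendsto F atTop (nhds E)) :
    ∃ Finv : ℝ → ℝ,
      ContinuousOn Finv (Set.Ico 0 E) ∧
      StrictMonoOn Finv (Set.Ico 0 E) ∧
      (∀ s ∈ Set.Ico (0 : ℝ) E, 0 ≤ Finv s ∧ F (Finv s) = s) ∧
      Tendsto Finv (nhdsWithin E (Set.Iio E)) atTop := by
  -- F t < E for t ≥ 0
  have hle : ∀ t : ℝ, 0 ≤ t → F t ≤ E := by
    intro t ht
    refine ge_of_tendsto htend ?_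
    filter_upwards [eventually_ge_atTop t] with u hu
    rcases eq_or_lt_of_le hu with rfl | hu'
    · exact le_rfl
    · exact (hmono ht (ht.trans hu) hu').le
  have hlt : ∀ t : ℝ, 0 ≤ t → F t < E := by
    intro t ht
    have h1 : F t < F (t + 1) := hmono ht (Set.mem_Ici.mpr (by linarith)) (by linarith)
    exact h1.trans_le (hle (t+1) (by linarith))
  -- surjectivity onto [0, E)
  have hsurj : ∀ s ∈ Set.Ico (0:ℝ) E, ∃ t, 0 ≤ t ∧ F t = s := by
    intro s hs
    obtain ⟨hs0, hsE⟩ := hs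
    have : ∀ᶠ u in atTop, s < F u := htend.eventually (eventually_gt_nhds hsE)
    obtain ⟨T, hT⟩ := (this.and (eventually_ge_atTop (0:ℝ))).exists
    obtain ⟨hTs, hT0⟩ := hT
    have hIcc : s ∈ Set.Icc (F 0) (F T) := ⟨by rw [hF0]; exact hs0, hTs.le⟩
    have hsub : Set.Icc (0:ℝ) T ⊆ Set.Ici 0 := fun x hx => hx.1
    have := intermediate_value_Icc hT0 (hcont.mono hsub)
    obtain ⟨t, htmem, htF⟩ := this hIcc
    exact ⟨t, htmem.1, htF⟩
  classical
  set Finv : ℝ → ℝ := fun s =>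
    if h : s ∈ Set.Ico (0:ℝ) E then (hsurj s h).choose else 0 with hFinv
  have hspec : ∀ s ∈ Set.Ico (0:ℝ) E, 0 ≤ Finv s ∧ F (Finv s) = s := by
    intro s hs
    simp only [hFinv, dif_pos hs]
    exact ⟨(hsurj s hs).choose_spec.1, (hsurj s hs).choose_spec.2⟩
  have hsm : StrictMonoOn Finv (Set.Ico 0 E) := by
    intro a ha b hb hab
    by_contra h
    push_neg at h
    have h1 := hspec a ha; have h2 := hspec b hb
    have : F (Finv b) ≤ F (Finv a) := by
      rcases eq_or_lt_of_le h with heq | hlt'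
      · rw [heq]
      · exact (hmono h2.1 h1.1 hlt').le
    rw [h1.2, h2.2] at this
    linarith
  refine ⟨Finv, ?_, hsm, hspec, ?_⟩
  · -- continuity
    intro a ha
    have h1 := hspec a ha
    rw [ContinuousWithinAt] at *
    apply tendsto_order.2
    constructor
    · intro b hb
      rcases lt_or_ge b 0 with hb0 | hb0
      · filter_upwards [self_mem_nhdsWithin] with s hs
        exact hb0.trans_le (hspec s hs).1
      · -- b < Finv a, b ≥ 0 : F b < a; eventually s > F b gives Finv s > b
        have hFb : F b < a := by
          have := hmono hb0 h1.1 hb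
          rwa [h1.2] at this
        have hev : ∀ᶠ s in nhdsWithin a (Set.Ico 0 E), F b < s :=
          eventually_nhdsWithin_of_eventually_nhds (eventually_gt_nhds hFb)
        filter_upwards [hev, self_mem_nhdsWithin] with s hs hmem
        by_contra hc
        push_neg at hc
        have h2 := hspec s hmem
        have : F (Finv s) ≤ F b := by
          rcases eq_or_lt_of_le hc with heq | hlt'
          · rw [heq]
          · exact (hmono h2.1 hb0 hlt').le
        rw [h2.2] at this; linarith
    · intro b hb
      -- Finv a < b ; pick c = (Finv a + b)/2 ; F c > a; eventually s < F c
      set c := (Finv a + b) / 2 with hc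
      have hc1 : Finv a < c := by simp [hc]; linarith
      have hc2 : c < b := by simp [hc]; linarith
      have hc0 : 0 ≤ c := h1.1.trans hc1.le
      have hFc : a < F c := by
        have := hmono h1.1 hc0 hc1
        rwa [h1.2] at this
      have hev : ∀ᶠ s in nhdsWithin a (Set.Ico 0 E), s < F c :=
        eventually_nhdsWithin_of_eventually_nhds (eventually_lt_nhds hFc)
      filter_upwards [hev, self_mem_nhdsWithin] with s hs hmem
      have h2 := hspec s hmem
      have : Finv s < c := by
        by_contra hcc
        push_neg at hcc
        have : F c ≤ F (Finv s) := by
          rcases eq_or_lt_of_le hcc with heq | hlt'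
          · rw [heq]
          · exact (hmono hc0 h2.1 hlt').le
        rw [h2.2] at this; linarith
      exact this.trans hc2
  · -- tendsto atTop
    rw [tendsto_atTop]
    intro M
    set M' := max M 0 with hM'
    have hM0 : 0 ≤ M' := le_max_right _ _
    have hFM : F M' < E := hlt M' hM0
    have hev1 : ∀ᶠ s in nhdsWithin E (Set.Iio E), F M' < s :=
      eventually_nhdsWithin_of_eventually_nhds (eventually_gt_nhds hFM)
    have hev2 : ∀ᶠ s in nhdsWithin E (Set.Iio E), s < E := by
      filter_upwards [self_mem_nhdsWithin] with s hs; exact hs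
    have hev3 : ∀ᶠ s in nhdsWithin E (Set.Iio E), (0:ℝ) ≤ s := by
      have h0E : (0:ℝ) < E := by have := hlt 0 le_rfl; rwa [hF0] at this
      exact eventually_nhdsWithin_of_eventually_nhds (eventually_ge_nhds h0E)
    filter_upwards [hev1, hev2, hev3] with s hs1 hs2 hs3
    have hmem : s ∈ Set.Ico (0:ℝ) E := ⟨hs3, hs2⟩
    have h2 := hspec s hmem
    have : M' < Finv s := by
      by_contra hcc
      push_neg at hcc
      have : F (Finv s) ≤ F M' := by
        rcases eq_or_lt_of_le hcc with heq | hlt'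
        · rw [heq]
        · exact (hmono h2.1 hM0 hlt').le
      rw [h2.2] at this; linarith
    exact (le_max_left M 0).trans this.le

/-- F(t) := ∫_0^t (λ'(s))² ds is continuous, strictly increasing on ℝ≥0, F(0)=0,
tends to E(D) = Σ k p_k at infinity, and admits a continuous strictly increasing
inverse F⁻¹ : [0, E(D)) → ℝ≥0 with F⁻¹(s) → ∞ as s → E(D)⁻. -/
theorem stmt6 (Δ : ℕ) (hΔ : 2 ≤ Δ) (p q : ℕ → ℝ)
    (hp0 : ∀ k, 0 ≤ p k)
    (hsupp : ∀ k, k < 2 ∨ Δ < k → p k = 0)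
    (hsum : ∑ k ∈ Finset.Icc 2 Δ, p k = 1)
    (hq : ∀ k, q k = ∑ d ∈ Finset.Icc k Δ, p d)
    (lam lam' : ℝ → ℝ) (hlam0 : lam 0 = 0)
    (hode : ∀ t, HasDerivAt lam (lam' t) t)
    (hlam' : ∀ t, lam' t = Real.exp (-(lam t)) *
        ∑ k ∈ Finset.range Δ, lam t ^ k / (Nat.factorial k : ℝ) * q (k + 1))
    (F : ℝ → ℝ) (hF : ∀ t, F t = ∫ s in Set.Ioc (0 : ℝ) t, (lam' s) ^ 2)
    (ED : ℝ) (hED : ED = ∑ k ∈ Finset.Icc 2 Δ, (k : ℝ) * p k) :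
    ContinuousOn F (Set.Ici 0) ∧
    StrictMonoOn F (Set.Ici 0) ∧
    F 0 = 0 ∧
    Tendsto F atTop (nhds ED) ∧
    ∃ Finv : ℝ → ℝ,
      ContinuousOn Finv (Set.Ico 0 ED) ∧
      StrictMonoOn Finv (Set.Ico 0 ED) ∧
      (∀ s ∈ Set.Ico (0 : ℝ) ED, 0 ≤ Finv s ∧ F (Finv s) = s) ∧
      Tendsto Finv (nhdsWithin ED (Set.Iio ED)) atTop := by
  classical
  have hIcc1 : Finset.Icc 1 Δ = insert 1 (Finset.Icc 2 Δ) := by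
    ext x; simp; omega
  have hq1 : q 1 = 1 := by
    rw [hq 1, hIcc1, Finset.sum_insert (by simp), hsupp 1 (by omega), hsum]
    ring
  have hq0 : ∀ k, 0 ≤ q k := by
    intro k; rw [hq]; exact Finset.sum_nonneg fun d _ => hp0 d
  have hlamc : Continuous lam := continuous_iff_continuousAt.2 fun t => (hode t).continuousAt
  have hlam'c : Continuous lam' := by
    have he : lam' = fun t => Real.exp (-(lam t)) *
        ∑ k ∈ Finset.range Δ, lam t ^ k / (Nat.factorial k : ℝ) * q (k + 1) := funext hlam'
    rw [he]
    exact (Real.continuous_exp.comp hlamc.neg).mul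
      (continuous_finset_sum _ fun k _ => ((hlamc.pow k).div_const _).mul continuous_const)
  have hderiv0 : ∀ t, lam t = 0 → lam' t = 1 := by
    intro t h0
    rw [hlam' t, h0]
    simp only [neg_zero, Real.exp_zero, one_mul]
    rw [Finset.sum_eq_single 0]
    · simp [hq1]
    · intro k _ hk0; simp [zero_pow hk0]
    · intro h; exact absurd (Finset.mem_range.2 (by omega)) h
  -- local strict monotonicity where lam' > 0
  have hlocal : ∀ c : ℝ, 0 < lam' c → ∃ δ > 0, StrictMonoOn lam (Set.Icc (c - δ) (c + δ)) := by
    intro c hc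
    have hopen : IsOpen {x | 0 < lam' x} := isOpen_lt continuous_const hlam'c
    obtain ⟨ε, hε, hball⟩ := Metric.isOpen_iff.1 hopen c hc
    refine ⟨ε/2, by linarith, ?_⟩
    apply strictMonoOn_of_deriv_pos (convex_Icc _ _) hlamc.continuousOn
    intro x hx
    rw [interior_Icc] at hx
    rw [(hode x).deriv]
    apply hball
    rw [Metric.mem_ball, Real.dist_eq, abs_lt]
    exact ⟨by linarith [hx.1], by linarith [hx.2]⟩
  -- positivity of lam on (0, ∞)
  have hpos : ∀ t : ℝ, 0 < t → 0 < lam t := by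
    obtain ⟨δ0, hδ0, hm0⟩ := hlocal 0 (by rw [hderiv0 0 hlam0]; norm_num)
    have hstep1 : ∀ u : ℝ, 0 < u → u ≤ δ0 → 0 < lam u := by
      intro u hu1 hu2
      have := hm0 (Set.mem_Icc.2 ⟨by linarith, by linarith⟩)
        (Set.mem_Icc.2 ⟨by linarith, by linarith⟩) hu1
      rwa [hlam0] at this
    intro t ht
    by_contra hcon
    push_neg at hcon
    have htδ : δ0 < t := by
      by_contra h; push_neg at h
      exact absurd (hstep1 t ht h) (not_lt.2 hcon)
    set S : Set ℝ := Set.Icc δ0 t ∩ {u | lam u ≤ 0} with hS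
    have hSclosed : IsClosed S := isClosed_Icc.inter (isClosed_le hlamc continuous_const)
    have hSne : S.Nonempty := ⟨t, ⟨htδ.le, le_rfl⟩, hcon⟩
    have hSbdd : BddBelow S := ⟨δ0, fun u hu => hu.1.1⟩
    set s := sInf S with hs
    have hsmem : s ∈ S := hSclosed.csInf_mem hSne hSbdd
    have hsδ : δ0 ≤ s := hsmem.1.1
    have hspos : 0 < s := lt_of_lt_of_le hδ0 hsδ
    have hbefore : ∀ u : ℝ, 0 < u → u < s → 0 < lam u := by
      intro u hu1 hu2
      rcases le_or_gt u δ0 with h | h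
      · exact hstep1 u hu1 h
      · by_contra hcu; push_neg at hcu
        have humem : u ∈ S := ⟨⟨h.le, by linarith [hsmem.1.2]⟩, hcu⟩
        exact absurd (csInf_le hSbdd humem) (not_le.2 hu2)
    have hlams0 : lam s = 0 := by
      have hge : 0 ≤ lam s := by
        have htd : Tendsto lam (nhdsWithin s (Set.Iio s)) (nhds (lam s)) :=
          (hlamc.tendsto s).mono_left nhdsWithin_le_nhds
        refine ge_of_tendsto htd ?_
        filter_upwards [Ioo_mem_nhdsLT_of_mem (Set.mem_Ioc.2 ⟨hspos, le_rfl⟩)] with u hu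
        exact (hbefore u hu.1 hu.2).le
      exact le_antisymm hsmem.2 hge
    obtain ⟨δ1, hδ1, hm1⟩ := hlocal s (by rw [hderiv0 s hlams0]; norm_num)
    set u := max (s - δ1) (s/2) with hu
    have hu1 : 0 < u := lt_of_lt_of_le (by linarith) (le_max_right _ _)
    have hu2 : u < s := max_lt (by linarith) (by linarith)
    have hu3 : s - δ1 ≤ u := le_max_left _ _
    have hlt := hm1 (Set.mem_Icc.2 ⟨hu3, by linarith⟩)
      (Set.mem_Icc.2 ⟨by linarith, by linarith⟩) hu2
    have hposu := hbefore u hu1 hu2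
    rw [hlams0] at hlt; linarith
  have hlam_nonneg : ∀ t : ℝ, 0 ≤ t → 0 ≤ lam t := by
    intro t ht
    rcases ht.eq_or_lt with rfl | h
    · exact le_of_eq hlam0.symm
    · exact (hpos t h).le
  have hsum_ge1 : ∀ t : ℝ, 0 ≤ lam t →
      1 ≤ ∑ k ∈ Finset.range Δ, lam t ^ k / (Nat.factorial k : ℝ) * q (k+1) := by
    intro t ht
    calc (1:ℝ) = lam t ^ 0 / (Nat.factorial 0 : ℝ) * q (0+1) := by simp [hq1]
      _ ≤ _ := Finset.single_le_sum (f := fun k => lam t ^ k / (Nat.factorial k : ℝ) * q (k+1))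
          (fun k _ => mul_nonneg (div_nonneg (pow_nonneg ht _) (Nat.cast_nonneg _)) (hq0 _))
          (Finset.mem_range.2 (by omega))
  have hlam'_pos : ∀ t : ℝ, 0 ≤ t → 0 < lam' t := by
    intro t ht
    rw [hlam' t]
    have h1 := hsum_ge1 t (hlam_nonneg t ht)
    have he := Real.exp_pos (-(lam t))
    nlinarith
  -- the key sum identity
  have hqsum : ∑ k ∈ Finset.range Δ, q (k+1) = ED := by
    have h1 : ∑ k ∈ Finset.range Δ, q (k+1) = ∑ k ∈ Finset.Icc 1 Δ, q k := by
      rw [show Finset.Icc 1 Δ = Finset.Ico 1 (Δ+1) by rw [Finset.Ico_add_one_right_eq_Icc],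
        Finset.sum_Ico_eq_sum_range]
      simp [add_comm]
    rw [h1]
    have h2 : ∑ k ∈ Finset.Icc 1 Δ, q k
        = ∑ k ∈ Finset.Icc 1 Δ, ∑ d ∈ Finset.Icc k Δ, p d :=
      Finset.sum_congr rfl fun k _ => hq k
    rw [h2]
    have h3 : ∑ k ∈ Finset.Icc 1 Δ, ∑ d ∈ Finset.Icc k Δ, p d
        = ∑ d ∈ Finset.Icc 1 Δ, ∑ k ∈ Finset.Icc 1 d, p d := by
      refine Finset.sum_comm' (s := Finset.Icc 1 Δ) (t := fun k => Finset.Icc k Δ)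
        (t' := Finset.Icc 1 Δ) (s' := fun d => Finset.Icc 1 d) (f := fun _ d => p d) ?_
      intro k d; simp; omega
    rw [h3]
    have h4 : ∀ d ∈ Finset.Icc 1 Δ, ∑ k ∈ Finset.Icc 1 d, p d = (d : ℝ) * p d := by
      intro d _
      rw [Finset.sum_const, Nat.card_Icc]
      simp [nsmul_eq_mul]
    rw [Finset.sum_congr rfl h4, hIcc1, Finset.sum_insert (by simp), hsupp 1 (by omega), hED]
    ring
  -- antiderivative
  set Φ : ℝ → ℝ := fun x => ED - ∑ k ∈ Finset.range Δ,
      q (k+1) * (Real.exp (-x) * ∑ j ∈ Finset.range (k+1), x ^ j / (Nat.factorial j : ℝ)) with hΦ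
  have hΦd : ∀ x : ℝ, HasDerivAt Φ
      (Real.exp (-x) * ∑ k ∈ Finset.range Δ, x ^ k / (Nat.factorial k : ℝ) * q (k+1)) x := by
    intro x
    have hsum' : HasDerivAt (fun y => ∑ k ∈ Finset.range Δ,
        q (k+1) * (Real.exp (-y) * ∑ j ∈ Finset.range (k+1), y ^ j / (Nat.factorial j : ℝ)))
        (∑ k ∈ Finset.range Δ, q (k+1) * (-(Real.exp (-x) * x ^ k / (Nat.factorial k : ℝ)))) x :=
      HasDerivAt.fun_sum fun k _ => (expPoly_hasDerivAt k x).const_mul _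
    have h := (hasDerivAt_const x ED).sub hsum'
    refine h.congr_deriv ?_
    rw [Finset.mul_sum, zero_sub, ← Finset.sum_neg_distrib]
    exact Finset.sum_congr rfl fun k _ => by ring
  have hΦc : Continuous Φ := continuous_iff_continuousAt.2 fun x => (hΦd x).continuousAt
  have hone : ∀ k : ℕ, ∑ j ∈ Finset.range (k+1), (0:ℝ) ^ j / (Nat.factorial j : ℝ) = 1 := by
    intro k
    rw [Finset.sum_eq_single 0]
    · simp
    · intro j _ hj; simp [zero_pow hj]
    · intro h; exact absurd (Finset.mem_range.2 (Nat.succ_pos k)) h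
  have hΦ0 : Φ 0 = 0 := by
    have h1 : ∀ k ∈ Finset.range Δ, q (k+1) *
        (Real.exp (-(0:ℝ)) * ∑ j ∈ Finset.range (k+1), (0:ℝ) ^ j / (Nat.factorial j : ℝ))
        = q (k+1) := by
      intro k _; rw [hone k]; simp
    show ED - _ = 0
    rw [Finset.sum_congr rfl h1, hqsum, sub_self]
  have hGd : ∀ t : ℝ, HasDerivAt (fun u => Φ (lam u)) ((lam' t) ^ 2) t := by
    intro t
    have h := (hΦd (lam t)).comp t (hode t)
    refine h.congr_deriv ?_
    rw [← hlam' t, sq]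
  have hFeq : ∀ t : ℝ, 0 ≤ t → F t = Φ (lam t) := by
    intro t ht
    have hint : IntervalIntegrable (fun s => (lam' s) ^ 2) volume 0 t :=
      ((hlam'c.pow 2).intervalIntegrable 0 t)
    have h := intervalIntegral.integral_eq_sub_of_hasDerivAt
      (f := fun u => Φ (lam u)) (f' := fun s => (lam' s) ^ 2) (fun x _ => hGd x) hint
    rw [hF t, ← intervalIntegral.integral_of_le ht, h]
    show Φ (lam t) - Φ (lam 0) = Φ (lam t)
    rw [hlam0, hΦ0, sub_zero]
  have hFcont : ContinuousOn F (Set.Ici 0) :=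
    ((hΦc.comp hlamc).continuousOn).congr fun t ht => hFeq t ht
  have hFsm : StrictMonoOn F (Set.Ici 0) := by
    have hG_sm : StrictMonoOn (fun u => Φ (lam u)) (Set.Ici 0) := by
      apply strictMonoOn_of_deriv_pos (convex_Ici 0)
        (show ContinuousOn (fun u => Φ (lam u)) (Set.Ici 0) from (hΦc.comp hlamc).continuousOn)
      intro x hx
      rw [interior_Ici] at hx
      rw [(hGd x).deriv]
      have := hlam'_pos x hx.le
      positivity
    intro a ha b hb hab
    rw [hFeq a ha, hFeq b hb]
    exact hG_sm ha hb hab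
  have hF00 : F 0 = 0 := by rw [hF 0]; simp
  -- lam tends to infinity
  have hlam_top : Tendsto lam atTop atTop := by
    have hhd : ∀ t : ℝ, HasDerivAt (fun u => Real.exp (lam u) - u)
        (Real.exp (lam t) * lam' t - 1) t := fun t => ((hode t).exp).sub (hasDerivAt_id t)
    have hmono2 : MonotoneOn (fun u => Real.exp (lam u) - u) (Set.Ici 0) := by
      apply monotoneOn_of_deriv_nonneg (convex_Ici 0)
        (show ContinuousOn (fun u => Real.exp (lam u) - u) (Set.Ici 0) from
          ((Real.continuous_exp.comp hlamc).sub continuous_id).continuousOn)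
        (fun x _ => (hhd x).differentiableAt.differentiableWithinAt)
      intro x hx
      rw [interior_Ici] at hx
      rw [(hhd x).deriv]
      have hx0 : 0 ≤ lam x := hlam_nonneg x hx.le
      have h1 : Real.exp (lam x) * lam' x
          = ∑ k ∈ Finset.range Δ, lam x ^ k / (Nat.factorial k : ℝ) * q (k+1) := by
        rw [hlam' x, ← mul_assoc, ← Real.exp_add]
        simp
      rw [h1]
      have := hsum_ge1 x hx0
      linarith
    have hexp_ge : ∀ t : ℝ, 0 ≤ t → 1 + t ≤ Real.exp (lam t) := by
      intro t ht
      have h' : Real.exp (lam 0) - 0 ≤ Real.exp (lam t) - t := hmono2 Set.self_mem_Ici ht ht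
      rw [hlam0, Real.exp_zero] at h'
      linarith
    have hlog : ∀ t : ℝ, 0 ≤ t → Real.log (1+t) ≤ lam t := by
      intro t ht
      calc Real.log (1+t) ≤ Real.log (Real.exp (lam t)) :=
            Real.log_le_log (by linarith) (hexp_ge t ht)
        _ = lam t := Real.log_exp _
    refine tendsto_atTop_mono' atTop ?_
      (Real.tendsto_log_atTop.comp (tendsto_atTop_add_const_left atTop 1 tendsto_id))
    filter_upwards [eventually_ge_atTop (0:ℝ)] with t ht
    exact hlog t ht
  -- Φ tends to ED
  have hS0 : Tendsto (fun x => ∑ k ∈ Finset.range Δ,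
      q (k+1) * (Real.exp (-x) * ∑ j ∈ Finset.range (k+1), x ^ j / (Nat.factorial j : ℝ)))
      atTop (nhds 0) := by
    have hterms : ∀ k ∈ Finset.range Δ, Tendsto (fun x : ℝ =>
        q (k+1) * (Real.exp (-x) * ∑ j ∈ Finset.range (k+1), x ^ j / (Nat.factorial j : ℝ)))
        atTop (nhds 0) := by
      intro k _
      have hinner : Tendsto (fun x : ℝ =>
          Real.exp (-x) * ∑ j ∈ Finset.range (k+1), x ^ j / (Nat.factorial j : ℝ))
          atTop (nhds 0) := by
        have hterm : ∀ j ∈ Finset.range (k+1), Tendsto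
            (fun x : ℝ => Real.exp (-x) * (x ^ j / (Nat.factorial j : ℝ))) atTop (nhds 0) := by
          intro j _
          have h := (Real.tendsto_pow_mul_exp_neg_atTop_nhds_zero j).div_const (Nat.factorial j : ℝ)
          simp only [zero_div] at h
          refine h.congr fun x => ?_
          ring
        have hsum2 := tendsto_finset_sum (Finset.range (k+1)) hterm
        simp only [Finset.sum_const_zero] at hsum2
        refine hsum2.congr fun x => ?_
        rw [Finset.mul_sum]
      have := hinner.const_mul (q (k+1))
      simpa using this
    have := tendsto_finset_sum (Finset.range Δ) hterms
    simpa using this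
  have hΦtop : Tendsto Φ atTop (nhds ED) := by
    have h := (tendsto_const_nhds (α := ℝ) (x := ED) (f := atTop)).sub hS0
    rw [sub_zero] at h
    exact h
  have hFtop : Tendsto F atTop (nhds ED) := by
    have hcomp : Tendsto (fun t => Φ (lam t)) atTop (nhds ED) := hΦtop.comp hlam_top
    apply hcomp.congr'
    filter_upwards [eventually_ge_atTop (0:ℝ)] with t ht
    exact (hFeq t ht).symm
  exact ⟨hFcont, hFsm, hF00, hFtop, exists_inverse F ED hFsm hFcont hF00 hFtop⟩
end
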